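/- Let μ : A → R be a feasible assignment, let m ≥ 1, let a_0, a_1, …, a_{m−1} be pairwise-distinct agents, and let r* ∈ R be a resource with residual capacity under μ, i.e., |μ^{-1}(r*)| < q(r*). Suppose each agent a_i with i < m−1 strictly prefers μ(a_{i+1}) to μ(a_i), and a_{m−1} strictly prefers r* to μ(a_{m−1}). Define μ′ by μ′(a_i) = μ(a_{i+1}) for i < m−1, μ′(a_{m−1}) = r*, and μ′(b) = μ(b) for every other agent b. Then μ′ is feasible and μ′ Pareto-dominates μ: every agent on the chain is strictly better off and every other agent's assignment is unchanged. In particular, μ is not Pareto optimal. -/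

import Mathlib

/-- An assignment is feasible if no resource exceeds its capacity. -/
def Feasible {A R : Type*} [Fintype A] [DecidableEq R] (q : R → ℕ) (μ : A → R) : Prop :=
  ∀ r : R, (Finset.univ.filter fun x : A => μ x = r).card ≤ q r

/-- `μ'` Pareto-dominates `μ`: every agent is weakly better off and some agent is
strictly better off (preferences `pref a` are strict orders). -/
def ParetoDominates {A R : Type*} (pref : A → R → R → Prop) (μ' μ : A → R) : Prop :=
  (∀ a : A, μ' a = μ a ∨ pref a (μ' a) (μ a)) ∧ ∃ a : A, pref a (μ' a) (μ a)

/-- `μ` is Pareto optimal if no feasible assignment Pareto-dominates it. -/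
def ParetoOptimal {A R : Type*} [Fintype A] [DecidableEq R]
    (q : R → ℕ) (pref : A → R → R → Prop) (μ : A → R) : Prop :=
  ∀ μ' : A → R, Feasible q μ' → ¬ ParetoDominates pref μ' μ

/-- shifting assignments along a chain of `m ≥ 1` distinct agents that
terminates at a resource `rstar` with residual capacity yields a feasible assignment
that Pareto-dominates `μ`: every agent on the chain is strictly better off and every
other agent's assignment is unchanged; in particular `μ` is not Pareto optimal. -/
theorem chain_trade_pareto_improves
    {A R : Type*} [Fintype A] [DecidableEq R]
    (q : R → ℕ) (pref : A → R → R → Prop)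
    (hpref : ∀ a : A, IsStrictTotalOrder R (pref a))
    (μ : A → R) (hfeas : Feasible q μ)
    (m : ℕ) (hm : 1 ≤ m) (a : Fin m → A) (hinj : Function.Injective a)
    (rstar : R)
    (hres : (Finset.univ.filter fun x : A => μ x = rstar).card < q rstar)
    (hchain : ∀ (i : ℕ) (h : i + 1 < m),
      pref (a ⟨i, Nat.lt_of_succ_lt h⟩) (μ (a ⟨i + 1, h⟩)) (μ (a ⟨i, Nat.lt_of_succ_lt h⟩)))
    (hlast : pref (a ⟨m - 1, by omega⟩) rstar (μ (a ⟨m - 1, by omega⟩)))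
    (μ' : A → R)
    (hμ'chain : ∀ (i : ℕ) (h : i + 1 < m),
      μ' (a ⟨i, Nat.lt_of_succ_lt h⟩) = μ (a ⟨i + 1, h⟩))
    (hμ'last : μ' (a ⟨m - 1, by omega⟩) = rstar)
    (hμ'fix : ∀ b : A, (∀ i : Fin m, a i ≠ b) → μ' b = μ b) :
    Feasible q μ' ∧
    (∀ i : Fin m, pref (a i) (μ' (a i)) (μ (a i))) ∧
    (∀ b : A, (∀ i : Fin m, a i ≠ b) → μ' b = μ b) ∧
    ParetoDominates pref μ' μ ∧

    ¬ ParetoOptimal q pref μ := by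
  classical
  have hm0 : 0 < m := hm
  set f : A → A := fun x =>
    if h : ∃ i : Fin m, a i = x then
      a ⟨((Classical.choose h).val + 1) % m, Nat.mod_lt _ hm0⟩
    else x with hf
  have hfa : ∀ i : Fin m, f (a i) = a ⟨(i.val + 1) % m, Nat.mod_lt _ hm0⟩ := by
    intro i
    have hex : ∃ j : Fin m, a j = a i := ⟨i, rfl⟩
    simp only [hf, dif_pos hex]
    have hji : Classical.choose hex = i := hinj (Classical.choose_spec hex)
    rw [hji]
  have hfb : ∀ x, (∀ i : Fin m, a i ≠ x) → f x = x := by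
    intro x hx
    have hnx : ¬ ∃ i : Fin m, a i = x := by push_neg; exact hx
    simp only [hf, dif_neg hnx]
  have hmodinj : ∀ i j : Fin m, (i.val + 1) % m = (j.val + 1) % m → i = j := by
    intro i j hij
    have hi := i.isLt; have hj := j.isLt
    apply Fin.ext
    by_cases h1 : i.val + 1 = m <;> by_cases h2 : j.val + 1 = m
    · omega
    · rw [h1, Nat.mod_self, Nat.mod_eq_of_lt (by omega)] at hij; omega
    · rw [h2, Nat.mod_self, Nat.mod_eq_of_lt (by omega)] at hij; omega
    · rw [Nat.mod_eq_of_lt (by omega), Nat.mod_eq_of_lt (by omega)] at hij; omega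
  have hfinj : Function.Injective f := by
    intro x y hxy
    by_cases hx : ∃ i : Fin m, a i = x <;> by_cases hy : ∃ j : Fin m, a j = y
    · obtain ⟨i, rfl⟩ := hx; obtain ⟨j, rfl⟩ := hy
      rw [hfa, hfa] at hxy
      have h1 := hinj hxy
      have h2 : i = j := hmodinj i j (congrArg Fin.val h1)
      rw [h2]
    · obtain ⟨i, rfl⟩ := hx
      rw [hfa, hfb y (fun j hj => hy ⟨j, hj⟩)] at hxy
      exact absurd ⟨_, hxy⟩ hy
    · obtain ⟨j, rfl⟩ := hy
      rw [hfb x (fun i hi => hx ⟨i, hi⟩), hfa] at hxy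
      exact absurd ⟨_, hxy.symm⟩ hx
    · rw [hfb x (fun i hi => hx ⟨i, hi⟩), hfb y (fun j hj => hy ⟨j, hj⟩)] at hxy
      exact hxy
  have hrel : ∀ x, x ≠ a ⟨m - 1, by omega⟩ → μ' x = μ (f x) := by
    intro x hx
    by_cases hex : ∃ i : Fin m, a i = x
    · obtain ⟨i, rfl⟩ := hex
      have hne : i.val + 1 < m := by
        rcases Nat.lt_or_ge (i.val + 1) m with h | h
        · exact h
        · exfalso
          have hieq : i = (⟨m - 1, by omega⟩ : Fin m) := Fin.ext (show i.val = m - 1 by have := i.isLt; omega)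
          exact hx (congrArg a hieq)
      rw [hfa]
      have hmod : (i.val + 1) % m = i.val + 1 := Nat.mod_eq_of_lt hne
      have h2 := hμ'chain i.val hne
      have h3 : (⟨(i.val + 1) % m, Nat.mod_lt _ hm0⟩ : Fin m) = ⟨i.val + 1, hne⟩ :=
        Fin.ext hmod
      rw [h3]
      exact h2
    · rw [hfb x (fun i hi => hex ⟨i, hi⟩)]
      exact hμ'fix x (fun i hi => hex ⟨i, hi⟩)
  have hbetter : ∀ i : Fin m, pref (a i) (μ' (a i)) (μ (a i)) := by
    intro i
    by_cases h : i.val + 1 < m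
    · have h1 := hchain i.val h
      have h2 := hμ'chain i.val h
      rw [← h2] at h1
      exact h1
    · have hieq : i = (⟨m - 1, by omega⟩ : Fin m) := Fin.ext (show i.val = m - 1 by have := i.isLt; omega)
      rw [hieq, hμ'last]
      exact hlast
  have hfeas' : Feasible q μ' := by
    intro r
    by_cases hr : r = rstar
    · subst hr
      set s := Finset.univ.filter fun x : A => μ' x = r with hs
      set alast : A := a ⟨m - 1, by omega⟩ with hal
      have hsub : s ⊆ insert alast (s.erase alast) := by
        intro x hx
        by_cases hxa : x = alast
        · simp [hxa]
        · exact Finset.mem_insert_of_mem (Finset.mem_erase.mpr ⟨hxa, hx⟩)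
      have hcard1 : s.card ≤ (s.erase alast).card + 1 :=
        le_trans (Finset.card_le_card hsub) (Finset.card_insert_le _ _)
      have hcard2 : (s.erase alast).card ≤
          (Finset.univ.filter fun x : A => μ x = r).card := by
        apply Finset.card_le_card_of_injOn f
        · intro x hx
          have hxne : x ≠ alast := (Finset.mem_erase.mp hx).1
          have hxr : μ' x = r := (Finset.mem_filter.mp (Finset.mem_erase.mp hx).2).2
          simp only [Finset.mem_coe, Finset.mem_filter, Finset.mem_univ, true_and]
          rw [← hrel x hxne]
          exact hxr
        · exact fun x _ y _ h => hfinj h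
      omega
    · apply le_trans _ (hfeas r)
      apply Finset.card_le_card_of_injOn f
      · intro x hx
        have hxr : μ' x = r := (Finset.mem_filter.mp hx).2
        have hxne : x ≠ a ⟨m - 1, by omega⟩ := by
          intro hxa
          rw [hxa, hμ'last] at hxr
          exact hr hxr.symm
        simp only [Finset.mem_coe, Finset.mem_filter, Finset.mem_univ, true_and]
        rw [← hrel x hxne]
        exact hxr
      · exact fun x _ y _ h => hfinj h
  have hdom : ParetoDominates pref μ' μ := by
    constructor
    · intro b
      by_cases hb : ∃ i : Fin m, a i = b
      · obtain ⟨i, rfl⟩ := hb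
        exact Or.inr (hbetter i)
      · exact Or.inl (hμ'fix b (fun i hi => hb ⟨i, hi⟩))
    · exact ⟨a ⟨m - 1, by omega⟩, hbetter _⟩
  exact ⟨hfeas', hbetter, hμ'fix, hdom, fun hPO => hPO μ' hfeas' hdom⟩
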